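/- Let 1 < p and define V_p(z) := |z|^{(p−2)/2} z for z ∈ ℝⁿ. For a C¹ vector field A₀ : ℝⁿ\{0} → ℝⁿ satisfying ν(|z|^{p−2} + a₀|z|^{q−2})|ξ|² ≤ ⟨∂A₀(z)ξ, ξ⟩ for all z ≠ 0, ξ ∈ ℝⁿ, with a₀ ≥ 0, 1 < p ≤ q and ν > 0, there exists a constant c = c(n, ν, p, q) such that |V_p(z₁) − V_p(z₂)|² + a₀ |V_q(z₁) − V_q(z₂)|² ≤ c ⟨A₀(z₁) − A₀(z₂), z₁ − z₂⟩ for all z₁, z₂ ∈ ℝⁿ. -/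

import Mathlib

open scoped RealInnerProductSpace



lemma rpow_lower (e : ℝ) {M x : ℝ} (hM : 0 < M) (h1 : M/2 ≤ x) (h2 : x ≤ M) :
    min 1 (2 ^ (-e)) * M ^ e ≤ x ^ e := by
  have hx : 0 < x := lt_of_lt_of_le (by linarith) h1
  have hMe : (0:ℝ) ≤ M ^ e := Real.rpow_nonneg hM.le e
  rcases le_total 0 e with he | he
  · have h3 : (M/2) ^ e ≤ x ^ e := Real.rpow_le_rpow (by positivity) h1 he
    have h4 : (M/2) ^ e = 2 ^ (-e) * M ^ e := by
      rw [Real.rpow_neg (by norm_num : (0:ℝ) ≤ 2), div_eq_mul_inv,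
        Real.mul_rpow hM.le (by norm_num : (0:ℝ) ≤ 2⁻¹),
        Real.inv_rpow (by norm_num : (0:ℝ) ≤ 2)]
      ring
    calc min 1 (2 ^ (-e)) * M ^ e ≤ 2 ^ (-e) * M ^ e :=
          mul_le_mul_of_nonneg_right (min_le_right _ _) hMe
      _ = (M/2) ^ e := h4.symm
      _ ≤ x ^ e := h3
  · have h3 : M ^ e ≤ x ^ e := Real.rpow_le_rpow_of_nonpos hx h2 he
    calc min 1 (2 ^ (-e)) * M ^ e ≤ 1 * M ^ e :=
          mul_le_mul_of_nonneg_right (min_le_left _ _) hMe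
      _ = M ^ e := one_mul _
      _ ≤ x ^ e := h3

lemma rpow_sub_rpow_abs_le (γ : ℝ) {x y : ℝ} (hx : 0 < x) (hy : 0 < y) (hyx : y ≤ x)
    (hy2 : x/2 < y) :
    |x ^ γ - y ^ γ| ≤ |γ| * (max 1 (2 ^ (1 - γ)) * x ^ (γ - 1)) * (x - y) := by
  have hx2 : 0 < x/2 := by linarith
  have hbound : ∀ s ∈ Set.Icc y x, ‖γ * s ^ (γ - 1)‖ ≤ |γ| * (max 1 (2 ^ (1 - γ)) * x ^ (γ - 1)) := by
    intro s hs
    have hs0 : 0 < s := lt_of_lt_of_le hy hs.1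
    rw [Real.norm_eq_abs, abs_mul, abs_of_nonneg (Real.rpow_nonneg hs0.le _)]
    refine mul_le_mul_of_nonneg_left ?_ (abs_nonneg γ)
    rcases le_total 1 γ with hγ1 | hγ1
    · have h1 : s ^ (γ - 1) ≤ x ^ (γ - 1) := Real.rpow_le_rpow hs0.le hs.2 (by linarith)
      have h2 : (1:ℝ) ≤ max 1 (2 ^ (1 - γ)) := le_max_left _ _
      nlinarith [Real.rpow_nonneg (le_of_lt (lt_of_lt_of_le hs0 hs.2)) (γ - 1)]
    · have h1 : s ^ (γ - 1) ≤ (x/2) ^ (γ - 1) :=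
        Real.rpow_le_rpow_of_nonpos hx2 (le_trans hy2.le hs.1) (by linarith)
      have h2 : (x/2) ^ (γ - 1) = (2:ℝ) ^ (1 - γ) * x ^ (γ - 1) := by
        rw [Real.div_rpow hx.le (by norm_num : (0:ℝ) ≤ 2), div_eq_mul_inv,
          ← Real.rpow_neg (by norm_num : (0:ℝ) ≤ 2), neg_sub]
        ring
      have h3 : (2:ℝ) ^ (1 - γ) ≤ max 1 ((2:ℝ) ^ (1 - γ)) := le_max_right _ _
      have h4 : (0:ℝ) ≤ x ^ (γ - 1) := Real.rpow_nonneg hx.le _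
      nlinarith [mul_le_mul_of_nonneg_right h3 h4]
  have hderiv : ∀ s ∈ Set.Icc y x, HasDerivWithinAt (fun s : ℝ => s ^ γ)
      (γ * s ^ (γ - 1)) (Set.Icc y x) s := fun s hs =>
    (Real.hasDerivAt_rpow_const (Or.inl (ne_of_gt (lt_of_lt_of_le hy hs.1)))).hasDerivWithinAt
  have := Convex.norm_image_sub_le_of_norm_hasDerivWithin_le hderiv hbound (convex_Icc y x)
    (Set.left_mem_Icc.mpr hyx) (Set.right_mem_Icc.mpr hyx)
  rw [Real.norm_eq_abs, Real.norm_eq_abs, abs_of_nonneg (by linarith : (0:ℝ) ≤ x - y)] at this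
  exact this

lemma V_diff_le {E : Type*} [NormedAddCommGroup E] [NormedSpace ℝ E] (γ : ℝ) (hγ : -(1/2) < γ)
    (a b : E) (hba : ‖b‖ ≤ ‖a‖) :
    ‖(‖a‖ ^ γ) • a - (‖b‖ ^ γ) • b‖ ≤
      (4 + |γ| * max 1 (2 ^ (1 - γ))) * (‖a‖ ^ γ * ‖a - b‖) := by
  have hmax1 : (1:ℝ) ≤ max 1 (2 ^ (1 - γ)) := le_max_left _ _
  have hCmul : 0 ≤ |γ| * max 1 (2 ^ (1 - γ)) :=
    mul_nonneg (abs_nonneg γ) (le_trans zero_le_one hmax1)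
  rcases eq_or_lt_of_le (norm_nonneg a) with ha0 | ha0
  · have ha : a = 0 := norm_eq_zero.mp ha0.symm
    have hb : b = 0 := norm_le_zero_iff.mp (ha0 ▸ hba)
    simp [ha, hb]
  have hnorm_a : ‖(‖a‖ ^ γ) • a‖ = ‖a‖ ^ γ * ‖a‖ := by
    rw [norm_smul, Real.norm_eq_abs, abs_of_nonneg (Real.rpow_nonneg (norm_nonneg a) γ)]
  have haγ : (0:ℝ) ≤ ‖a‖ ^ γ := Real.rpow_nonneg (norm_nonneg a) γ
  rcases le_or_gt ‖b‖ (‖a‖/2) with hsmall | hbig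
  · -- far-apart case
    have hab : ‖a‖/2 ≤ ‖a - b‖ := by
      have := norm_sub_norm_le a b
      linarith
    have hterm_b : ‖(‖b‖ ^ γ) • b‖ ≤ ‖a‖ ^ γ * ‖a‖ := by
      rcases eq_or_ne b 0 with rfl | hb0
      · simp [norm_smul]
        positivity
      · have hbpos : 0 < ‖b‖ := norm_pos_iff.mpr hb0
        have h1 : ‖(‖b‖ ^ γ) • b‖ = ‖b‖ ^ (γ + 1) := by
          rw [norm_smul, Real.norm_eq_abs, abs_of_nonneg (Real.rpow_nonneg (norm_nonneg b) γ),
            Real.rpow_add_one hbpos.ne' γ]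
        have h2 : ‖b‖ ^ (γ + 1) ≤ ‖a‖ ^ (γ + 1) :=
          Real.rpow_le_rpow (norm_nonneg b) hba (by linarith)
        rw [h1, ← Real.rpow_add_one (ne_of_gt ha0) γ]
        exact h2
    calc ‖(‖a‖ ^ γ) • a - (‖b‖ ^ γ) • b‖ ≤ ‖(‖a‖ ^ γ) • a‖ + ‖(‖b‖ ^ γ) • b‖ := norm_sub_le _ _
      _ ≤ ‖a‖ ^ γ * ‖a‖ + ‖a‖ ^ γ * ‖a‖ := by rw [hnorm_a]; linarith
      _ = 2 * (‖a‖ ^ γ * ‖a‖) := by ring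
      _ ≤ 2 * (‖a‖ ^ γ * (2 * ‖a - b‖)) := by
          refine mul_le_mul_of_nonneg_left (mul_le_mul_of_nonneg_left (by linarith) haγ) (by norm_num)
      _ = 4 * (‖a‖ ^ γ * ‖a - b‖) := by ring
      _ ≤ (4 + |γ| * max 1 (2 ^ (1 - γ))) * (‖a‖ ^ γ * ‖a - b‖) := by
          refine mul_le_mul_of_nonneg_right (by linarith) ?_
          positivity
  · -- close case
    have hbpos : 0 < ‖b‖ := lt_of_le_of_lt (by positivity) hbig
    have hsplit : (‖a‖ ^ γ) • a - (‖b‖ ^ γ) • b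
        = (‖a‖ ^ γ) • (a - b) + (‖a‖ ^ γ - ‖b‖ ^ γ) • b := by
      rw [smul_sub, sub_smul]; abel
    have hm := rpow_sub_rpow_abs_le γ ha0 hbpos hba hbig
    have habs : |‖a‖ - ‖b‖| ≤ ‖a - b‖ := abs_norm_sub_norm_le a b
    have hsub : ‖a‖ - ‖b‖ ≤ ‖a - b‖ := le_trans (le_abs_self _) habs
    have hxa : ‖a‖ ^ (γ - 1) * ‖a‖ = ‖a‖ ^ γ := by
      rw [← Real.rpow_add_one (ne_of_gt ha0) (γ - 1)]
      ring_nf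
    have hterm2 : ‖(‖a‖ ^ γ - ‖b‖ ^ γ) • b‖ ≤ |γ| * max 1 (2 ^ (1 - γ)) * (‖a‖ ^ γ * ‖a - b‖) := by
      rw [norm_smul, Real.norm_eq_abs]
      have h1 : |‖a‖ ^ γ - ‖b‖ ^ γ| * ‖b‖
          ≤ (|γ| * (max 1 (2 ^ (1 - γ)) * ‖a‖ ^ (γ - 1)) * (‖a‖ - ‖b‖)) * ‖a‖ := by
        refine mul_le_mul hm hba (norm_nonneg b) ?_
        have h4 : (0:ℝ) ≤ ‖a‖ ^ (γ - 1) := Real.rpow_nonneg (norm_nonneg a) _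
        have h5 : (0:ℝ) ≤ ‖a‖ - ‖b‖ := by linarith
        have : (0:ℝ) ≤ |γ| * (max 1 ((2:ℝ) ^ (1 - γ)) * ‖a‖ ^ (γ - 1)) := by positivity
        exact mul_nonneg this h5
      refine le_trans h1 ?_
      have h4 : (0:ℝ) ≤ ‖a‖ ^ (γ - 1) := Real.rpow_nonneg (norm_nonneg a) _
      calc |γ| * (max 1 (2 ^ (1 - γ)) * ‖a‖ ^ (γ - 1)) * (‖a‖ - ‖b‖) * ‖a‖
          ≤ |γ| * (max 1 (2 ^ (1 - γ)) * ‖a‖ ^ (γ - 1)) * ‖a - b‖ * ‖a‖ := by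
            refine mul_le_mul_of_nonneg_right (mul_le_mul_of_nonneg_left hsub ?_) (norm_nonneg a)
            positivity
        _ = |γ| * max 1 (2 ^ (1 - γ)) * ((‖a‖ ^ (γ - 1) * ‖a‖) * ‖a - b‖) := by ring
        _ = |γ| * max 1 (2 ^ (1 - γ)) * (‖a‖ ^ γ * ‖a - b‖) := by rw [hxa]
    calc ‖(‖a‖ ^ γ) • a - (‖b‖ ^ γ) • b‖
        ≤ ‖(‖a‖ ^ γ) • (a - b)‖ + ‖(‖a‖ ^ γ - ‖b‖ ^ γ) • b‖ := by rw [hsplit]; exact norm_add_le _ _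
      _ ≤ ‖a‖ ^ γ * ‖a - b‖ + |γ| * max 1 (2 ^ (1 - γ)) * (‖a‖ ^ γ * ‖a - b‖) := by
          refine add_le_add (le_of_eq ?_) hterm2
          rw [norm_smul, Real.norm_eq_abs, abs_of_nonneg haγ]
      _ ≤ (4 + |γ| * max 1 (2 ^ (1 - γ))) * (‖a‖ ^ γ * ‖a - b‖) := by
          have h5 : (0:ℝ) ≤ ‖a‖ ^ γ * ‖a - b‖ := by positivity
          nlinarith


variable {E : Type*} [NormedAddCommGroup E] [InnerProductSpace ℝ E]

lemma hasDerivAt_inner_seg {A : E → E} (z₂ w : E) (t : ℝ)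
    (hd : DifferentiableAt ℝ A (z₂ + t • w)) :
    HasDerivAt (fun s : ℝ => ⟪A (z₂ + s • w), w⟫) ⟪fderiv ℝ A (z₂ + t • w) w, w⟫ t := by
  have h1 : HasDerivAt (fun s : ℝ => z₂ + s • w) w t := by
    simpa using ((hasDerivAt_id t).smul_const w).const_add z₂
  have h2 := hd.hasFDerivAt.comp_hasDerivAt t h1
  have h3 := h2.inner ℝ (hasDerivAt_const t w)
  simpa using h3

lemma seg_grow {A : E → E} (hA : Continuous A)
    (hd : ∀ z : E, z ≠ 0 → DifferentiableAt ℝ A z)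
    (z₂ w : E) {u v K : ℝ} (huv : u ≤ v)
    (h0 : ∀ t ∈ Set.Ioo u v, z₂ + t • w ≠ 0)
    (hK : ∀ t ∈ Set.Ioo u v, K ≤ ⟪fderiv ℝ A (z₂ + t • w) w, w⟫) :
    ⟪A (z₂ + u • w), w⟫ + K * (v - u) ≤ ⟪A (z₂ + v • w), w⟫ := by
  have hcont : Continuous (fun t : ℝ => ⟪A (z₂ + t • w), w⟫ - K * t) := by
    refine Continuous.sub ?_ (continuous_const.mul continuous_id)
    exact (hA.comp (continuous_const.add (continuous_id.smul continuous_const))).inner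
      continuous_const
  have key : MonotoneOn (fun t : ℝ => ⟪A (z₂ + t • w), w⟫ - K * t) (Set.Icc u v) := by
    apply monotoneOn_of_hasDerivWithinAt_nonneg (convex_Icc u v) hcont.continuousOn
      (f' := fun t => ⟪fderiv ℝ A (z₂ + t • w) w, w⟫ - K)
    · intro t ht
      rw [interior_Icc] at ht
      have hK' : HasDerivAt (fun t : ℝ => K * t) K t := by
        simpa using (hasDerivAt_id t).const_mul K
      exact ((hasDerivAt_inner_seg z₂ w t (hd _ (h0 t ht))).sub hK').hasDerivWithinAt
    · intro t ht
      rw [interior_Icc] at ht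
      have := hK t ht
      linarith
  have h := key (Set.left_mem_Icc.2 huv) (Set.right_mem_Icc.2 huv) huv
  simp only at h
  linarith

lemma seg_mono {A : E → E} (hA : Continuous A)
    (hd : ∀ z : E, z ≠ 0 → DifferentiableAt ℝ A z)
    (z₂ : E) {w : E} (hw : w ≠ 0)
    (hpos : ∀ z : E, z ≠ 0 → (0:ℝ) ≤ ⟪fderiv ℝ A z w, w⟫)
    {u v : ℝ} (huv : u ≤ v) :
    ⟪A (z₂ + u • w), w⟫ ≤ ⟪A (z₂ + v • w), w⟫ := by
  by_cases hex : ∃ t₀ ∈ Set.Ioo u v, z₂ + t₀ • w = 0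
  · obtain ⟨t₀, ht₀, hz0⟩ := hex
    have huniq : ∀ t : ℝ, z₂ + t • w = 0 → t = t₀ := by
      intro t ht
      have h2 : t • w = t₀ • w := add_left_cancel (ht.trans hz0.symm)
      exact smul_left_injective ℝ hw h2
    have h1 := seg_grow hA hd z₂ w (K := 0) ht₀.1.le
      (fun t ht h => absurd (huniq t h) (ne_of_lt ht.2))
      (fun t ht => hpos _ (fun h => absurd (huniq t h) (ne_of_lt ht.2)))
    have h2 := seg_grow hA hd z₂ w (K := 0) ht₀.2.le
      (fun t ht h => absurd (huniq t h) (ne_of_gt ht.1))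
      (fun t ht => hpos _ (fun h => absurd (huniq t h) (ne_of_gt ht.1)))
    linarith
  · push_neg at hex
    have h1 := seg_grow hA hd z₂ w (K := 0) huv hex
      (fun t ht => hpos _ (hex t ht))
    linarith


section helpers
end helpers

theorem aux_main {N : ℕ} (p q ν : ℝ) (hp : 1 < p) (hpq : p ≤ q) (hν : 0 < ν)
    (a₀ : ℝ) (ha₀ : 0 ≤ a₀)
    (A₀ : EuclideanSpace ℝ (Fin N) → EuclideanSpace ℝ (Fin N))
    (hA : Continuous A₀)
    (hdiff : ∀ z : EuclideanSpace ℝ (Fin N), z ≠ 0 → DifferentiableAt ℝ A₀ z)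
    (hell : ∀ z : EuclideanSpace ℝ (Fin N), z ≠ 0 → ∀ ξ : EuclideanSpace ℝ (Fin N),
      ν * (‖z‖ ^ (p - 2) + a₀ * ‖z‖ ^ (q - 2)) * ‖ξ‖ ^ 2 ≤ ⟪fderiv ℝ A₀ z ξ, ξ⟫)
    (z₁ z₂ : EuclideanSpace ℝ (Fin N)) (hz : ‖z₂‖ ≤ ‖z₁‖) :
    ‖(‖z₁‖ ^ ((p - 2) / 2)) • z₁ - (‖z₂‖ ^ ((p - 2) / 2)) • z₂‖ ^ 2 +
      a₀ * ‖(‖z₁‖ ^ ((q - 2) / 2)) • z₁ - (‖z₂‖ ^ ((q - 2) / 2)) • z₂‖ ^ 2 ≤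
    (4 / ν * ((4 + |(p - 2) / 2| * max 1 ((2:ℝ) ^ (1 - (p - 2) / 2))) ^ 2 / min 1 ((2:ℝ) ^ (-(p - 2)))
      + (4 + |(q - 2) / 2| * max 1 ((2:ℝ) ^ (1 - (q - 2) / 2))) ^ 2 / min 1 ((2:ℝ) ^ (-(q - 2)))))
      * ⟪A₀ z₁ - A₀ z₂, z₁ - z₂⟫ := by
  rcases eq_or_ne z₁ z₂ with rfl | hne
  · simp
  have hz₁ : z₁ ≠ 0 := by
    intro h
    apply hne
    have hz2 : z₂ = 0 := by
      rw [h, norm_zero] at hz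
      exact norm_le_zero_iff.mp hz
    rw [h, hz2]
  have hM : 0 < ‖z₁‖ := norm_pos_iff.mpr hz₁
  have hw : z₁ - z₂ ≠ 0 := sub_ne_zero.mpr hne
  -- Step B : upper bounds for the V-differences
  have hVp := V_diff_le ((p - 2) / 2) (by linarith) z₁ z₂ hz
  have hVq := V_diff_le ((q - 2) / 2) (by linarith) z₁ z₂ hz
  have hsq : ∀ γ e : ℝ, γ + γ = e → (‖z₁‖ ^ γ) ^ 2 = ‖z₁‖ ^ e := by
    intro γ e he
    rw [sq, ← Real.rpow_add hM, he]
  have hBp : ‖(‖z₁‖ ^ ((p - 2) / 2)) • z₁ - (‖z₂‖ ^ ((p - 2) / 2)) • z₂‖ ^ 2 ≤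
      (4 + |(p - 2) / 2| * max 1 ((2:ℝ) ^ (1 - (p - 2) / 2))) ^ 2
        * (‖z₁‖ ^ (p - 2) * ‖z₁ - z₂‖ ^ 2) := by
    calc ‖(‖z₁‖ ^ ((p - 2) / 2)) • z₁ - (‖z₂‖ ^ ((p - 2) / 2)) • z₂‖ ^ 2
        ≤ ((4 + |(p - 2) / 2| * max 1 ((2:ℝ) ^ (1 - (p - 2) / 2)))
            * (‖z₁‖ ^ ((p - 2) / 2) * ‖z₁ - z₂‖)) ^ 2 :=
          pow_le_pow_left₀ (norm_nonneg _) hVp 2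
      _ = (4 + |(p - 2) / 2| * max 1 ((2:ℝ) ^ (1 - (p - 2) / 2))) ^ 2
            * ((‖z₁‖ ^ ((p - 2) / 2)) ^ 2 * ‖z₁ - z₂‖ ^ 2) := by ring
      _ = _ := by rw [hsq _ _ (by ring : (p - 2) / 2 + (p - 2) / 2 = p - 2)]
  have hBq : ‖(‖z₁‖ ^ ((q - 2) / 2)) • z₁ - (‖z₂‖ ^ ((q - 2) / 2)) • z₂‖ ^ 2 ≤
      (4 + |(q - 2) / 2| * max 1 ((2:ℝ) ^ (1 - (q - 2) / 2))) ^ 2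
        * (‖z₁‖ ^ (q - 2) * ‖z₁ - z₂‖ ^ 2) := by
    calc ‖(‖z₁‖ ^ ((q - 2) / 2)) • z₁ - (‖z₂‖ ^ ((q - 2) / 2)) • z₂‖ ^ 2
        ≤ ((4 + |(q - 2) / 2| * max 1 ((2:ℝ) ^ (1 - (q - 2) / 2)))
            * (‖z₁‖ ^ ((q - 2) / 2) * ‖z₁ - z₂‖)) ^ 2 :=
          pow_le_pow_left₀ (norm_nonneg _) hVq 2
      _ = (4 + |(q - 2) / 2| * max 1 ((2:ℝ) ^ (1 - (q - 2) / 2))) ^ 2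
            * ((‖z₁‖ ^ ((q - 2) / 2)) ^ 2 * ‖z₁ - z₂‖ ^ 2) := by ring
      _ = _ := by rw [hsq _ _ (by ring : (q - 2) / 2 + (q - 2) / 2 = q - 2)]
  -- Step A : lower bound for the inner product
  have hpos : ∀ z : EuclideanSpace ℝ (Fin N), z ≠ 0 →
      (0:ℝ) ≤ ⟪fderiv ℝ A₀ z (z₁ - z₂), z₁ - z₂⟫ := by
    intro z hz0
    refine le_trans ?_ (hell z hz0 (z₁ - z₂))
    have h1 : (0:ℝ) ≤ ‖z‖ ^ (p - 2) := Real.rpow_nonneg (norm_nonneg z) _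
    have h2 : (0:ℝ) ≤ ‖z‖ ^ (q - 2) := Real.rpow_nonneg (norm_nonneg z) _
    have h3 : (0:ℝ) ≤ ‖z₁ - z₂‖ ^ 2 := by positivity
    have h5 := mul_nonneg ha₀ h2
    exact mul_nonneg (mul_nonneg hν.le (add_nonneg h1 h5)) h3
  have hseg : ∀ t ∈ Set.Ioo (3/4 : ℝ) 1,
      ‖z₁‖ / 2 ≤ ‖z₂ + t • (z₁ - z₂)‖ ∧ ‖z₂ + t • (z₁ - z₂)‖ ≤ ‖z₁‖ := by
    intro t ht
    have hrep : z₂ + t • (z₁ - z₂) = t • z₁ + (1 - t) • z₂ := by module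
    have ht1 : (0:ℝ) ≤ t := by linarith [ht.1]
    have ht2 : (0:ℝ) ≤ 1 - t := by linarith [ht.2]
    have e1 : ‖t • z₁‖ = t * ‖z₁‖ := by
      rw [norm_smul, Real.norm_eq_abs, abs_of_nonneg ht1]
    have e2 : ‖(1 - t) • z₂‖ = (1 - t) * ‖z₂‖ := by
      rw [norm_smul, Real.norm_eq_abs, abs_of_nonneg ht2]
    have hz2le : (1 - t) * ‖z₂‖ ≤ (1 - t) * ‖z₁‖ := mul_le_mul_of_nonneg_left hz ht2
    constructor
    · have h3 : ‖t • z₁‖ ≤ ‖t • z₁ + (1 - t) • z₂‖ + ‖(1 - t) • z₂‖ :=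
        norm_le_add_norm_add _ _
      rw [hrep]
      rw [e1, e2] at h3
      have h4 : (0:ℝ) ≤ (2 * t - 1 - 1/2) * ‖z₁‖ :=
        mul_nonneg (by linarith [ht.1]) hM.le
      nlinarith
    · rw [hrep]
      calc ‖t • z₁ + (1 - t) • z₂‖ ≤ ‖t • z₁‖ + ‖(1 - t) • z₂‖ := norm_add_le _ _
        _ = t * ‖z₁‖ + (1 - t) * ‖z₂‖ := by rw [e1, e2]
        _ ≤ t * ‖z₁‖ + (1 - t) * ‖z₁‖ := by linarith
        _ = ‖z₁‖ := by ring
  have h0 : ∀ t ∈ Set.Ioo (3/4 : ℝ) 1, z₂ + t • (z₁ - z₂) ≠ 0 := by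
    intro t ht h
    have := (hseg t ht).1
    rw [h, norm_zero] at this
    linarith
  have hK : ∀ t ∈ Set.Ioo (3/4 : ℝ) 1,
      ν * (min 1 ((2:ℝ) ^ (-(p - 2))) * ‖z₁‖ ^ (p - 2)
        + a₀ * (min 1 ((2:ℝ) ^ (-(q - 2))) * ‖z₁‖ ^ (q - 2))) * ‖z₁ - z₂‖ ^ 2
      ≤ ⟪fderiv ℝ A₀ (z₂ + t • (z₁ - z₂)) (z₁ - z₂), z₁ - z₂⟫ := by
    intro t ht
    obtain ⟨hl, hu⟩ := hseg t ht
    have e1 := rpow_lower (p - 2) hM hl hu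
    have e2 := rpow_lower (q - 2) hM hl hu
    refine le_trans ?_ (hell _ (h0 t ht) (z₁ - z₂))
    have hW : (0:ℝ) ≤ ‖z₁ - z₂‖ ^ 2 := by positivity
    refine mul_le_mul_of_nonneg_right (mul_le_mul_of_nonneg_left ?_ hν.le) hW
    exact add_le_add e1 (mul_le_mul_of_nonneg_left e2 ha₀)
  have h1 := seg_grow hA hdiff z₂ (z₁ - z₂) (u := 3/4) (v := 1) (by norm_num) h0 hK
  have h2 := seg_mono hA hdiff z₂ hw hpos (u := (0:ℝ)) (v := 3/4) (by norm_num)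
  have e0 : z₂ + (0:ℝ) • (z₁ - z₂) = z₂ := by simp
  have eone : z₂ + (1:ℝ) • (z₁ - z₂) = z₁ := by rw [one_smul]; abel
  rw [e0] at h2
  rw [eone] at h1
  have hI : ν * (min 1 ((2:ℝ) ^ (-(p - 2))) * ‖z₁‖ ^ (p - 2)
        + a₀ * (min 1 ((2:ℝ) ^ (-(q - 2))) * ‖z₁‖ ^ (q - 2))) * ‖z₁ - z₂‖ ^ 2 * (1/4)
      ≤ ⟪A₀ z₁ - A₀ z₂, z₁ - z₂⟫ := by
    rw [inner_sub_left]
    linarith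
  -- Combine
  set Cp := 4 + |(p - 2) / 2| * max 1 ((2:ℝ) ^ (1 - (p - 2) / 2)) with hCp_def
  set Cq := 4 + |(q - 2) / 2| * max 1 ((2:ℝ) ^ (1 - (q - 2) / 2)) with hCq_def
  set κp := min 1 ((2:ℝ) ^ (-(p - 2))) with hκp_def
  set κq := min 1 ((2:ℝ) ^ (-(q - 2))) with hκq_def
  set P := ‖z₁‖ ^ (p - 2) with hP_def
  set Q := ‖z₁‖ ^ (q - 2) with hQ_def
  set W := ‖z₁ - z₂‖ ^ 2 with hW_def
  have hκp_pos : 0 < κp := lt_min one_pos (Real.rpow_pos_of_pos two_pos _)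
  have hκq_pos : 0 < κq := lt_min one_pos (Real.rpow_pos_of_pos two_pos _)
  have hP0 : 0 ≤ P := Real.rpow_nonneg (norm_nonneg z₁) _
  have hQ0 : 0 ≤ Q := Real.rpow_nonneg (norm_nonneg z₁) _
  have hW0 : (0:ℝ) ≤ W := by rw [hW_def]; positivity
  have hS0 : 0 ≤ Cp ^ 2 / κp + Cq ^ 2 / κq :=
    add_nonneg (div_nonneg (sq_nonneg _) hκp_pos.le) (div_nonneg (sq_nonneg _) hκq_pos.le)
  have s1 : Cp ^ 2 ≤ (Cp ^ 2 / κp + Cq ^ 2 / κq) * κp := by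
    have d1 : Cp ^ 2 / κp * κp = Cp ^ 2 := div_mul_cancel₀ _ (ne_of_gt hκp_pos)
    have hn : 0 ≤ Cq ^ 2 / κq * κp :=
      mul_nonneg (div_nonneg (sq_nonneg _) hκq_pos.le) hκp_pos.le
    rw [add_mul, d1]
    linarith
  have s2 : Cq ^ 2 ≤ (Cp ^ 2 / κp + Cq ^ 2 / κq) * κq := by
    have d1 : Cq ^ 2 / κq * κq = Cq ^ 2 := div_mul_cancel₀ _ (ne_of_gt hκq_pos)
    have hn : 0 ≤ Cp ^ 2 / κp * κq :=
      mul_nonneg (div_nonneg (sq_nonneg _) hκp_pos.le) hκq_pos.le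
    rw [add_mul, d1]
    linarith
  have t1 : Cp ^ 2 * (P * W) ≤ ((Cp ^ 2 / κp + Cq ^ 2 / κq) * κp) * (P * W) :=
    mul_le_mul_of_nonneg_right s1 (mul_nonneg hP0 hW0)
  have t2 : Cq ^ 2 * (Q * W) ≤ ((Cp ^ 2 / κp + Cq ^ 2 / κq) * κq) * (Q * W) :=
    mul_le_mul_of_nonneg_right s2 (mul_nonneg hQ0 hW0)
  have t3 := mul_le_mul_of_nonneg_left t2 ha₀
  have hc0 : 0 ≤ 4 / ν * (Cp ^ 2 / κp + Cq ^ 2 / κq) := by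
    have : (0:ℝ) ≤ 4 / ν := by positivity
    exact mul_nonneg this hS0
  calc ‖(‖z₁‖ ^ ((p - 2) / 2)) • z₁ - (‖z₂‖ ^ ((p - 2) / 2)) • z₂‖ ^ 2 +
      a₀ * ‖(‖z₁‖ ^ ((q - 2) / 2)) • z₁ - (‖z₂‖ ^ ((q - 2) / 2)) • z₂‖ ^ 2
      ≤ Cp ^ 2 * (P * W) + a₀ * (Cq ^ 2 * (Q * W)) :=
        add_le_add hBp (mul_le_mul_of_nonneg_left hBq ha₀)
    _ ≤ ((Cp ^ 2 / κp + Cq ^ 2 / κq) * κp) * (P * W)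
        + a₀ * (((Cp ^ 2 / κp + Cq ^ 2 / κq) * κq) * (Q * W)) := add_le_add t1 t3
    _ = (4 / ν * (Cp ^ 2 / κp + Cq ^ 2 / κq))
        * (ν * (κp * P + a₀ * (κq * Q)) * W * (1/4)) := by
        field_simp [hν.ne', hκp_pos.ne', hκq_pos.ne']
    _ ≤ (4 / ν * (Cp ^ 2 / κp + Cq ^ 2 / κq)) * ⟪A₀ z₁ - A₀ z₂, z₁ - z₂⟫ :=
        mul_le_mul_of_nonneg_left hI hc0

theorem stmt_12 {N : ℕ} (p q ν : ℝ) (hp : 1 < p) (hpq : p ≤ q) (hν : 0 < ν) :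
    ∃ c : ℝ, 0 < c ∧ ∀ a₀ : ℝ, 0 ≤ a₀ →
      ∀ A₀ : EuclideanSpace ℝ (Fin N) → EuclideanSpace ℝ (Fin N),
        Continuous A₀ →
        (∀ z : EuclideanSpace ℝ (Fin N), z ≠ 0 → DifferentiableAt ℝ A₀ z) →
        (∀ z : EuclideanSpace ℝ (Fin N), z ≠ 0 → ∀ ξ : EuclideanSpace ℝ (Fin N),
          ν * (‖z‖ ^ (p - 2) + a₀ * ‖z‖ ^ (q - 2)) * ‖ξ‖ ^ 2 ≤ ⟪fderiv ℝ A₀ z ξ, ξ⟫) →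
        ∀ z₁ z₂ : EuclideanSpace ℝ (Fin N),
          ‖(‖z₁‖ ^ ((p - 2) / 2)) • z₁ - (‖z₂‖ ^ ((p - 2) / 2)) • z₂‖ ^ 2 +
              a₀ * ‖(‖z₁‖ ^ ((q - 2) / 2)) • z₁ - (‖z₂‖ ^ ((q - 2) / 2)) • z₂‖ ^ 2 ≤
            c * ⟪A₀ z₁ - A₀ z₂, z₁ - z₂⟫ := by
  refine ⟨4 / ν * ((4 + |(p - 2) / 2| * max 1 ((2:ℝ) ^ (1 - (p - 2) / 2))) ^ 2 / min 1 ((2:ℝ) ^ (-(p - 2)))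
      + (4 + |(q - 2) / 2| * max 1 ((2:ℝ) ^ (1 - (q - 2) / 2))) ^ 2 / min 1 ((2:ℝ) ^ (-(q - 2)))), ?_, ?_⟩
  · have h1 : 0 < min 1 ((2:ℝ) ^ (-(p - 2))) := lt_min one_pos (Real.rpow_pos_of_pos two_pos _)
    have h2 : 0 < min 1 ((2:ℝ) ^ (-(q - 2))) := lt_min one_pos (Real.rpow_pos_of_pos two_pos _)
    have h3 : (0:ℝ) < 4 + |(p - 2) / 2| * max 1 ((2:ℝ) ^ (1 - (p - 2) / 2)) := by positivity
    have h4 : (0:ℝ) < 4 + |(q - 2) / 2| * max 1 ((2:ℝ) ^ (1 - (q - 2) / 2)) := by positivity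
    positivity
  · intro a₀ ha₀ A₀ hA hdiff hell z₁ z₂
    rcases le_total ‖z₂‖ ‖z₁‖ with hc | hc
    · exact aux_main p q ν hp hpq hν a₀ ha₀ A₀ hA hdiff hell z₁ z₂ hc
    · have h := aux_main p q ν hp hpq hν a₀ ha₀ A₀ hA hdiff hell z₂ z₁ hc
      rw [norm_sub_rev ((‖z₂‖ ^ ((p - 2) / 2)) • z₂), norm_sub_rev ((‖z₂‖ ^ ((q - 2) / 2)) • z₂),
        ← neg_sub (A₀ z₁) (A₀ z₂), ← neg_sub z₁ z₂, inner_neg_neg] at h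
      exact h
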